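/- Let (a_n)_{n≥1} be a sequence of real numbers bounded above by some K such that limsup_{n→∞} (1/n) Σ_{i=1}^n a_i ≤ -η₀ < 0. Then for every η ∈ (0, η₀) there exist infinitely many indices m such that Σ_{i=m+1}^{m+k} a_i ≤ -kη for all k ≥ 1. -/

import Mathlib

open Filter Finset

/-- Pliss's lemma: if `(a_n)_{n≥1}` is bounded above by `K` and
`limsup (1/n) Σ_{i=1}^n a_i ≤ -η₀ < 0`, then for every `η ∈ (0, η₀)` there are infinitely
many indices `m` such that `Σ_{i=m+1}^{m+k} a_i ≤ -kη` for all `k ≥ 1`. -/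
theorem pliss_lemma (a : ℕ → ℝ) (K η₀ : ℝ) (hη₀ : 0 < η₀)
    (hK : ∀ n, a n ≤ K)
    (hlim : Filter.limsup (fun n : ℕ => (n : ℝ)⁻¹ * ∑ i ∈ Finset.Icc 1 n, a i)
      Filter.atTop ≤ -η₀) :
    ∀ η : ℝ, 0 < η → η < η₀ →
      {m : ℕ | ∀ k : ℕ, 1 ≤ k →
        ∑ i ∈ Finset.Icc (m + 1) (m + k), a i ≤ -(k : ℝ) * η}.Infinite := by
  intro η hη hηη₀
  set S : ℕ → ℝ := fun n => ∑ i ∈ Finset.Icc 1 n, a i with hS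
  set f : ℕ → ℝ := fun n : ℕ => (n : ℝ)⁻¹ * S n with hf
  -- f is bounded above
  have hbdd : IsBoundedUnder (· ≤ ·) atTop f := by
    refine isBoundedUnder_of ⟨max K 0, fun n => ?_⟩
    rcases Nat.eq_zero_or_pos n with h0 | h1
    · simp [hf, hS, h0]
    · have hn : (0:ℝ) < n := by exact_mod_cast h1
      have hSle : S n ≤ n * K := by
        have : S n ≤ ∑ _i ∈ Finset.Icc 1 n, K := Finset.sum_le_sum fun i _ => hK i
        simpa [Nat.card_Icc, mul_comm] using this
      have : f n ≤ (n : ℝ)⁻¹ * (n * K) :=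
        mul_le_mul_of_nonneg_left hSle (inv_nonneg.mpr hn.le)
      have h2 : (n : ℝ)⁻¹ * (n * K) = K := by field_simp
      exact (this.trans_eq h2).trans (le_max_left _ _)
  set η' : ℝ := (η + η₀) / 2 with hη'
  have hηη' : η < η' := by rw [hη']; linarith
  have hη'η₀ : η' < η₀ := by rw [hη']; linarith
  have hev : ∀ᶠ n in atTop, f n < -η' :=
    eventually_lt_of_limsup_lt (lt_of_le_of_lt hlim (by linarith)) hbdd
  set B : ℕ → ℝ := fun n => S n + n * η with hB
  -- B tends to -∞
  have hBbot : Tendsto B atTop atBot := by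
    refine tendsto_atBot_mono' atTop (f₁ := fun n : ℕ => (n : ℝ) * (η - η')) ?_ ?_
    · filter_upwards [hev, eventually_ge_atTop 1] with n hn h1
      have hn0 : (0:ℝ) < n := by exact_mod_cast h1
      have : S n < n * (-η') := by
        have := (mul_lt_mul_iff_right₀ hn0).mpr hn
        rwa [hf, ← mul_assoc, mul_inv_cancel₀ hn0.ne', one_mul] at this
      have h3 : B n < n * (-η') + n * η := by simp only [hB]; linarith
      have hr : (n:ℝ) * (-η') + (n:ℝ) * η = (n:ℝ) * (η - η') := by ring
      linarith
    · have h1 : Tendsto (fun n : ℕ => (n : ℝ)) atTop atTop := tendsto_natCast_atTop_atTop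
      exact h1.atTop_mul_const_of_neg (by linarith)
  -- main claim: for every m there is a Pliss point ≥ m
  have main : ∀ m : ℕ, ∃ p, m ≤ p ∧ p ∈ {m : ℕ | ∀ k : ℕ, 1 ≤ k →
      ∑ i ∈ Finset.Icc (m + 1) (m + k), a i ≤ -(k : ℝ) * η} := by
    intro m
    have hev2 : ∀ᶠ n in atTop, B n < B m := hBbot.eventually (eventually_lt_atBot (B m))
    obtain ⟨N, hN⟩ := eventually_atTop.mp hev2
    have hmN : m < N := by
      by_contra h
      exact absurd (hN m (le_of_not_gt h)) (lt_irrefl _)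
    set T : Finset ℕ := (Finset.range N).filter (fun n => m ≤ n ∧ B m ≤ B n) with hT
    have hmT : m ∈ T := by
      simp [hT, Finset.mem_filter, Finset.mem_range, hmN]
    obtain ⟨p, hpT, hpmax⟩ := T.exists_max_image B ⟨m, hmT⟩
    have hpfacts := (Finset.mem_filter.mp hpT).2
    refine ⟨p, hpfacts.1, fun k hk => ?_⟩
    -- B (p+k) ≤ B p
    have hBpk : B (p + k) ≤ B p := by
      by_cases h : B m ≤ B (p + k)
      · have hlt : p + k < N := by
          by_contra hge
          exact absurd (hN _ (le_of_not_gt hge)) (not_lt.mpr h)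
        exact hpmax _ (Finset.mem_filter.mpr ⟨Finset.mem_range.mpr hlt,
          le_trans hpfacts.1 (Nat.le_add_right p k), h⟩)
      · exact le_trans (le_of_not_ge h) hpfacts.2
    -- convert
    have hsum : S p + ∑ i ∈ Finset.Icc (p + 1) (p + k), a i = S (p + k) := by
      simp only [hS]
      rw [show Finset.Icc 1 p = Finset.Ioc 0 p from Finset.Icc_add_one_left_eq_Ioc 0 p,
        show Finset.Icc (p+1) (p+k) = Finset.Ioc p (p+k) from Finset.Icc_add_one_left_eq_Ioc p (p+k),
        show Finset.Icc 1 (p+k) = Finset.Ioc 0 (p+k) from Finset.Icc_add_one_left_eq_Ioc 0 (p+k)]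
      exact Finset.sum_Ioc_consecutive a (Nat.zero_le p) (Nat.le_add_right p k)
    have : S (p + k) + ((p : ℝ) + k) * η ≤ S p + p * η := by
      have := hBpk
      rw [hB] at this
      simpa [Nat.cast_add] using this
    have : ∑ i ∈ Finset.Icc (p + 1) (p + k), a i ≤ -(k : ℝ) * η := by
      nlinarith [hsum]
    exact this
  -- conclude infinite
  intro hfin
  obtain ⟨M, hM⟩ := hfin.bddAbove
  obtain ⟨p, hp, hpP⟩ := main (M + 1)
  exact absurd (hM hpP) (by omega)
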